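/- Let M be a matroid of finite rank m, and let S be a finite sequence of non-loops in M with |S| > m(r-1), colored so that each color is used on at most one element (i.e., the coloring is injective on S). Then there exist r pairwise disjoint subsequences S_1, …, S_r with cl(∅) ⊊ cl(S_1) ⊆ … ⊆ cl(S_r), and each S_i is trivially rainbow. (Colorful matroidal Tverberg specializes to the uncolored version when all colors are distinct.) -/

import Mathlib

private lemma matroidal_tverberg_key {α ι : Type*} [DecidableEq ι]
    (M : Matroid α) (m : ℕ)
    (hrk : ∀ I : Set α, M.Indep I → I.encard ≤ (m : ℕ∞))
    (S : ι → α) (hS : ∀ i, S i ∈ M.E) (hS' : ∀ i, S i ∉ M.closure ∅) :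
    ∀ r : ℕ, ∀ K : Finset ι, K.card > m * r →
      ∃ J : Fin (r + 1) → Finset ι,
        (∀ k, J k ⊆ K) ∧
        (∀ i j, i ≠ j → Disjoint (J i) (J j)) ∧
        (∀ k, M.closure ∅ ⊂ M.closure (S '' (J k : Set ι))) ∧
        (∀ i j : Fin (r + 1), i ≤ j →
          M.closure (S '' (J i : Set ι)) ⊆ M.closure (S '' (J j : Set ι))) := by
  classical
  intro r
  induction r with
  | zero =>
    intro K hK
    obtain ⟨i, hi⟩ := Finset.card_pos.mp (by simpa using hK)
    have huniq : ∀ a b : Fin (0 + 1), a = b := by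
      intro a b
      have := a.isLt; have := b.isLt
      exact Fin.ext (by omega)
    refine ⟨fun _ => {i}, fun _ => Finset.singleton_subset_iff.mpr hi,
      fun a b hab => absurd (huniq a b) hab, fun k => ?_, fun a b _ => by
        rw [huniq a b]⟩
    rw [Set.ssubset_iff_of_subset (M.closure_subset_closure (Set.empty_subset _))]
    refine ⟨S i, ?_, hS' i⟩
    exact M.subset_closure _ (by simpa using hS i) (by simp)
  | succ r IH =>
    intro K hK
    have hKne : K.Nonempty := Finset.card_pos.mp (by omega)
    obtain ⟨i₀, hi₀⟩ := hKne
    have hXE : S '' (K : Set ι) ⊆ M.E := by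
      rintro x ⟨i, -, rfl⟩; exact hS i
    obtain ⟨I, hI⟩ := M.exists_isBasis (S '' (K : Set ι)) hXE
    have hIcard : I.Finite ∧ I.ncard ≤ m :=
      Set.encard_le_coe_iff_finite_ncard_le.mp (hrk I hI.indep)
    -- pick a preimage in K for each element of I
    have hsec : ∀ x ∈ I, ∃ i, i ∈ K ∧ S i = x := by
      intro x hx
      obtain ⟨i, hi, rfl⟩ := hI.subset hx
      exact ⟨i, hi, rfl⟩
    set f : α → ι := fun x => if h : ∃ i, i ∈ K ∧ S i = x then h.choose else i₀ with hf
    have hfK : ∀ x ∈ I, f x ∈ K := by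
      intro x hx
      simp only [hf, dif_pos (hsec x hx)]
      exact (hsec x hx).choose_spec.1
    have hfS : ∀ x ∈ I, S (f x) = x := by
      intro x hx
      simp only [hf, dif_pos (hsec x hx)]
      exact (hsec x hx).choose_spec.2
    set T : Finset ι := hIcard.1.toFinset.image f with hT
    have hTK : T ⊆ K := by
      intro i hi
      simp only [hT, Finset.mem_image, Set.Finite.mem_toFinset] at hi
      obtain ⟨x, hx, rfl⟩ := hi
      exact hfK x hx
    have hTS : S '' (T : Set ι) = I := by
      apply Set.Subset.antisymm
      · rintro y ⟨i, hi, rfl⟩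
        simp only [hT, Finset.coe_image, Set.Finite.coe_toFinset] at hi
        obtain ⟨x, hx, rfl⟩ := hi
        rw [hfS x hx]; exact hx
      · intro x hx
        exact ⟨f x, by simp [hT, Set.Finite.mem_toFinset, Finset.mem_image]; exact ⟨x, hx, rfl⟩,
          hfS x hx⟩
    have hTcard : T.card ≤ m := by
      calc T.card ≤ hIcard.1.toFinset.card := Finset.card_image_le
        _ = I.ncard := (Set.ncard_eq_toFinset_card I hIcard.1).symm
        _ ≤ m := hIcard.2
    have hTclosure : M.closure (S '' (T : Set ι)) = M.closure (S '' (K : Set ι)) := by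
      rw [hTS, hI.closure_eq_closure]
    set K' : Finset ι := K \ T with hK'
    have hK'card : K'.card > m * r := by
      have h1 : K'.card = K.card - T.card := by rw [hK']; exact Finset.card_sdiff_of_subset hTK
      have h2 : m * (r + 1) = m * r + m := by ring
      omega
    obtain ⟨J', hJ'K, hJ'disj, hJ'ne, hJ'chain⟩ := IH K' hK'card
    have hJ'K2 : ∀ k, (J' k : Set ι) ⊆ (K : Set ι) := fun k =>
      Finset.coe_subset.mpr ((hJ'K k).trans (Finset.sdiff_subset))
    refine ⟨Fin.snoc J' T, ?_, ?_, ?_, ?_⟩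
    · intro k
      refine Fin.lastCases ?_ ?_ k
      · simpa [Fin.snoc] using hTK
      · intro k'; simpa [Fin.snoc_castSucc] using (hJ'K k').trans (Finset.sdiff_subset)
    · have hdisjT : ∀ k, Disjoint T (J' k) := fun k =>
        Finset.disjoint_left.mpr (fun x hxT hxJ => (Finset.mem_sdiff.mp (hJ'K k hxJ)).2 hxT)
      intro a b hab
      rcases Fin.eq_castSucc_or_eq_last a with ⟨a', rfl⟩ | rfl <;>
        rcases Fin.eq_castSucc_or_eq_last b with ⟨b', rfl⟩ | rfl
      · simp only [Fin.snoc_castSucc]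
        exact hJ'disj a' b' (fun h => hab (by rw [h]))
      · simpa [Fin.snoc_castSucc, Fin.snoc_last] using (hdisjT a').symm
      · simpa [Fin.snoc_castSucc, Fin.snoc_last] using hdisjT b'
      · exact absurd rfl hab
    · intro k
      rcases Fin.eq_castSucc_or_eq_last k with ⟨k', rfl⟩ | rfl
      · simpa [Fin.snoc_castSucc] using hJ'ne k'
      · rw [Fin.snoc_last, hTclosure]
        exact (hJ'ne 0).trans_le (M.closure_subset_closure
          (Set.image_mono (hJ'K2 0)))
    · intro a b hab
      rcases Fin.eq_castSucc_or_eq_last a with ⟨a', rfl⟩ | rfl <;>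
        rcases Fin.eq_castSucc_or_eq_last b with ⟨b', rfl⟩ | rfl
      · simp only [Fin.snoc_castSucc]
        exact hJ'chain a' b' (Fin.castSucc_le_castSucc_iff.mp hab)
      · rw [Fin.snoc_castSucc, Fin.snoc_last, hTclosure]
        exact M.closure_subset_closure (Set.image_mono (hJ'K2 a'))
      · have := b'.isLt
        simp only [Fin.le_def, Fin.val_last, Fin.coe_castSucc] at hab
        omega
      · exact subset_rfl

/-- Colorful matroidal Tverberg with an injective coloring: the uncolored version,
where every subsequence is trivially rainbow. -/
theorem matroidal_tverberg_injective_coloring {α ι C : Type*} [Fintype ι]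
    [DecidableEq ι]
    (M : Matroid α) (m r : ℕ) (hr : 1 ≤ r)
    (B : Set α) (hB : M.IsBase B) (hBfin : B.Finite) (hBm : B.ncard = m)
    (S : ι → α) (hS : ∀ i, S i ∈ M.E) (hS' : ∀ i, S i ∉ M.closure ∅)
    (c : ι → C) (hc : Function.Injective c)
    (hlen : Fintype.card ι > m * (r - 1)) :
    ∃ J : Fin r → Finset ι,
      (∀ i j, i ≠ j → Disjoint (J i) (J j)) ∧
      (∀ k : Fin r, Set.InjOn c (J k : Set ι)) ∧
      M.closure ∅ ⊂ M.closure (S '' (J ⟨0, hr⟩ : Set ι)) ∧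
      (∀ i j : Fin r, i ≤ j →
        M.closure (S '' (J i : Set ι)) ⊆ M.closure (S '' (J j : Set ι))) := by
  have hrk : ∀ I : Set α, M.Indep I → I.encard ≤ (m : ℕ∞) := by
    intro I hI
    obtain ⟨B', hB', hIB'⟩ := hI.exists_isBase_superset
    calc I.encard ≤ B'.encard := Set.encard_le_encard hIB'
      _ = B.encard := (hB.encard_eq_encard_of_isBase hB').symm
      _ = (m : ℕ∞) := by rw [← hBm, hBfin.encard_eq_coe_toFinset_card,
            Set.ncard_eq_toFinset_card B hBfin]
  obtain ⟨r', rfl⟩ : ∃ r', r = r' + 1 := ⟨r - 1, by omega⟩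
  have hlen' : (Finset.univ : Finset ι).card > m * r' := by
    simpa using hlen
  obtain ⟨J, -, hdisj, hne, hchain⟩ :=
    matroidal_tverberg_key M m hrk S hS hS' r' Finset.univ hlen'
  exact ⟨J, hdisj, fun k => hc.injOn, hne _, hchain⟩
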